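/- Let H be a complex Hilbert space, x, y ∈ H, and A a bounded operator on H such that for every λ ∈ ℂ the operator xx* + |λ|² yy* + λA + conj(λ)A* has rank at most 1. If x and y are linearly independent, then A = μ xy* or A = μ yx* for some μ ∈ ℂ with |μ| = 1. -/

import Mathlib

local notation "⟪" X ", " Y "⟫" => @inner ℂ _ _ X Y

private lemma extract (c00 c10 c01 c20 c11 c02 c21 c12 c22 : ℂ)
    (h : ∀ l : ℂ, c00 + c10*l + c01*(starRingEnd ℂ l) + c20*l^2 + c11*(l*(starRingEnd ℂ l))
      + c02*(starRingEnd ℂ l)^2 + c21*(l^2*(starRingEnd ℂ l)) + c12*(l*(starRingEnd ℂ l)^2)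
      + c22*(l^2*(starRingEnd ℂ l)^2) = 0) :
    c10 = 0 ∧ c20 = 0 ∧ c11 = 0 ∧ c21 = 0 := by
  have h0 := h 0
  have h1 := h 1
  have hm1 := h (-1)
  have h2 := h 2
  have hm2 := h (-2)
  have hi := h Complex.I
  have hmi := h (-Complex.I)
  have h2i := h (2*Complex.I)
  have h1i := h (1+Complex.I)
  simp only [map_zero, map_one, map_neg, map_ofNat, map_add, map_mul, Complex.conj_I]
    at h0 h1 hm1 h2 hm2 hi hmi h2i h1i
  refine ⟨?_, ?_, ?_, ?_⟩
  · linear_combination (((1:ℂ)/3) + ((1:ℂ)/6)*Complex.I) * h1 + (((-1:ℂ)/3) + ((1:ℂ)/6)*Complex.I) * hm1 + (((-1:ℂ)/24) + ((-1:ℂ)/24)*Complex.I) * h2 + (((1:ℂ)/24) + ((-1:ℂ)/24)*Complex.I) * hm2 + (((-1:ℂ)/2)*Complex.I) * hi + (((1:ℂ)/6)*Complex.I) * hmi + (((1:ℂ)/12)*Complex.I) * h2i + ((((-1:ℂ)/2)) * c01 + (((1:ℂ)/2)) * c10 + ((1:ℂ)*Complex.I + (-1:ℂ)*Complex.I^3)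 * c22) * Complex.I_sq
  · linear_combination (((-1:ℂ)/8)*Complex.I) * h0 + (((1:ℂ)/8) + ((5:ℂ)/24)*Complex.I) * h1 + (((1:ℂ)/8) + ((1:ℂ)/24)*Complex.I) * hm1 + (((1:ℂ)/48)*Complex.I) * h2 + (((-1:ℂ)/48)*Complex.I) * hm2 + (((-1:ℂ)/8) + ((1:ℂ)/8)*Complex.I) * hi + (((-1:ℂ)/8) + ((-1:ℂ)/24)*Complex.I) * hmi + (((1:ℂ)/24)*Complex.I) * h2i + (((-1:ℂ)/4)*Complex.I) * h1i + ((((-1:ℂ)/4)) * c02 + (((-1:ℂ)/4)) * c11 + (((-1:ℂ)/4)*Complex.I + ((-1:ℂ)/4)*Complex.I^2) * c12 + (((3:ℂ)/4)) * c20 + (((-1:ℂ)/4)*Complex.I + ((1:ℂ)/4)*Complex.I^2) * c21 + (((-1:ℂ)/4) + ((1:ℂ)/4)*Complex.I^2 + ((-1:ℂ)/2)*Complex.I^3) * c22) * Complex.I_sq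
  · linear_combination (((-5:ℂ)/4)) * h0 + (((5:ℂ)/12)) * h1 + (((5:ℂ)/12)) * hm1 + (((-1:ℂ)/24)) * h2 + (((-1:ℂ)/24)) * hm2 + (((1:ℂ)/4)) * hi + (((1:ℂ)/4)) * hmi + ((((-1:ℂ)/2)) * c02 + (((1:ℂ)/2)) * c11 + (((-1:ℂ)/2)) * c20 + (((1:ℂ)/2) + ((-1:ℂ)/2)*Complex.I^2) * c22) * Complex.I_sq
  · linear_combination (((-1:ℂ)/12) + ((-1:ℂ)/6)*Complex.I) * h1 + (((1:ℂ)/12) + ((-1:ℂ)/6)*Complex.I) * hm1 + (((1:ℂ)/24) + ((1:ℂ)/24)*Complex.I) * h2 + (((-1:ℂ)/24) + ((1:ℂ)/24)*Complex.I) * hm2 + (((1:ℂ)/4)*Complex.I) * hi + (((1:ℂ)/12)*Complex.I) * hmi + (((-1:ℂ)/12)*Complex.I) * h2i + ((((-1:ℂ)/2) + ((1:ℂ)/2)*Complex.I^2) * c12 + (((1:ℂ)/2) + ((-1:ℂ)/2)*Complex.I^2) * c21 + ((-1:ℂ)*Complex.I + (1:ℂ)*Complex.I^3) * c22) * Comp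lex.I_sq

private lemma minors {H : Type*} [NormedAddCommGroup H] [InnerProductSpace ℂ H]
    (f : H →L[ℂ] H) (hf : LinearMap.rank (f : H →ₗ[ℂ] H) ≤ 1) (s t u w : H) :
    ⟪s, f u⟫ * ⟪t, f w⟫ - ⟪s, f w⟫ * ⟪t, f u⟫ = 0 := by
  rw [LinearMap.rank] at hf
  obtain ⟨v₀, hv⟩ := rank_le_one_iff.mp hf
  obtain ⟨cu, hcu⟩ := hv ⟨f u, LinearMap.mem_range_self _ u⟩
  obtain ⟨cw, hcw⟩ := hv ⟨f w, LinearMap.mem_range_self _ w⟩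
  have hu : f u = cu • (v₀ : H) := by
    have := congrArg (Subtype.val) hcu; simpa using this.symm
  have hw : f w = cw • (v₀ : H) := by
    have := congrArg (Subtype.val) hcw; simpa using this.symm
  rw [hu, hw]
  simp only [inner_smul_right]
  ring

/-- `rk1 ξ η` is the rank-one operator `ξη* : τ ↦ ⟨η, τ⟩ ξ`. -/
noncomputable def rk1 {H : Type*} [NormedAddCommGroup H] [InnerProductSpace ℂ H]
    (ξ η : H) : H →L[ℂ] H := (innerSL ℂ η).smulRight ξ

theorem stmt2 {H : Type*} [NormedAddCommGroup H] [InnerProductSpace ℂ H] [CompleteSpace H]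
    (x y : H) (A : H →L[ℂ] H)
    (h : ∀ l : ℂ, LinearMap.rank
      (((rk1 x x + (‖l‖ ^ 2 : ℂ) • rk1 y y + l • A +
        (starRingEnd ℂ l) • ContinuousLinearMap.adjoint A) : H →L[ℂ] H) : H →ₗ[ℂ] H) ≤ 1)
    (hxy : LinearIndependent ℂ ![x, y]) :
    ∃ μ : ℂ, ‖μ‖ = 1 ∧ (A = μ • rk1 x y ∨ A = μ • rk1 y x) := by
  classical
  have hpair : ∀ s t : ℂ, s • x + t • y = 0 → s = 0 ∧ t = 0 :=
    LinearIndependent.pair_iff.mp hxy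
  have hx0 : x ≠ 0 := by simpa using hxy.ne_zero 0
  have hy0 : y ≠ 0 := by simpa using hxy.ne_zero 1
  have ha : ⟪x,x⟫ ≠ 0 := inner_self_ne_zero.mpr hx0
  have hb : ⟪y,y⟫ ≠ 0 := inner_self_ne_zero.mpr hy0
  -- nondegeneracy of the Gram determinant
  have hd : ⟪x,x⟫*⟪y,y⟫ - ⟪x,y⟫*⟪y,x⟫ ≠ 0 := by
    intro hd0
    have hvv : ⟪⟪y,y⟫ • x - ⟪y,x⟫ • y, ⟪y,y⟫ • x - ⟪y,x⟫ • y⟫ = (0:ℂ) := by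
      simp only [inner_sub_left, inner_sub_right, inner_smul_left, inner_smul_right,
        inner_conj_symm]
      linear_combination ⟪y,y⟫ * hd0
    rw [inner_self_eq_zero] at hvv
    have hv2 : ⟪y,y⟫ • x + (-⟪y,x⟫) • y = 0 := by
      simpa [sub_eq_add_neg, neg_smul] using hvv
    exact hb (hpair _ _ hv2).1
  -- expansion of the inner products of the pencil
  have hBi : ∀ (l : ℂ) (s v : H),
      ⟪s, (rk1 x x + (‖l‖ ^ 2 : ℂ) • rk1 y y + l • A +
        (starRingEnd ℂ l) • ContinuousLinearMap.adjoint A) v⟫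
      = ⟪x,v⟫*⟪s,x⟫ + l*(starRingEnd ℂ l)*(⟪y,v⟫*⟪s,y⟫) + l*⟪s,A v⟫
        + (starRingEnd ℂ l)*⟪A s,v⟫ := by
    intro l s v
    have hnorm : ((‖l‖ ^ 2 : ℂ)) = l * (starRingEnd ℂ l) := by
      rw [← Complex.ofReal_pow, Complex.sq_norm, Complex.mul_conj]
    simp only [ContinuousLinearMap.add_apply, ContinuousLinearMap.smul_apply, rk1,
      ContinuousLinearMap.smulRight_apply, innerSL_apply_apply, inner_add_right, inner_smul_right,
      ContinuousLinearMap.adjoint_inner_right, hnorm]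
  have hm : ∀ (l : ℂ) (s t u w : H),
      (⟪x,u⟫*⟪s,x⟫ + l*(starRingEnd ℂ l)*(⟪y,u⟫*⟪s,y⟫) + l*⟪s,A u⟫ + (starRingEnd ℂ l)*⟪A s,u⟫)
      * (⟪x,w⟫*⟪t,x⟫ + l*(starRingEnd ℂ l)*(⟪y,w⟫*⟪t,y⟫) + l*⟪t,A w⟫ + (starRingEnd ℂ l)*⟪A t,w⟫)
      - (⟪x,w⟫*⟪s,x⟫ + l*(starRingEnd ℂ l)*(⟪y,w⟫*⟪s,y⟫) + l*⟪s,A w⟫ + (starRingEnd ℂ l)*⟪A s,w⟫)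
      * (⟪x,u⟫*⟪t,x⟫ + l*(starRingEnd ℂ l)*(⟪y,u⟫*⟪t,y⟫) + l*⟪t,A u⟫ + (starRingEnd ℂ l)*⟪A t,u⟫)
      = 0 := by
    intro l s t u w
    have hmin := minors _ (h l) s t u w
    simp only [hBi] at hmin
    linear_combination hmin
  have key : ∀ s t u w : H,
      (⟪x,u⟫*⟪s,x⟫*⟪t,A w⟫ + ⟪s,A u⟫*(⟪x,w⟫*⟪t,x⟫) - ⟪x,w⟫*⟪s,x⟫*⟪t,A u⟫
        - ⟪s,A w⟫*(⟪x,u⟫*⟪t,x⟫) = 0)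
      ∧ (⟪s,A u⟫*⟪t,A w⟫ - ⟪s,A w⟫*⟪t,A u⟫ = 0)
      ∧ (⟪x,u⟫*⟪s,x⟫*(⟪y,w⟫*⟪t,y⟫) + ⟪y,u⟫*⟪s,y⟫*(⟪x,w⟫*⟪t,x⟫)
          - ⟪x,w⟫*⟪s,x⟫*(⟪y,u⟫*⟪t,y⟫) - ⟪y,w⟫*⟪s,y⟫*(⟪x,u⟫*⟪t,x⟫)
          + ⟪s,A u⟫*⟪A t,w⟫ + ⟪A s,u⟫*⟪t,A w⟫ - ⟪s,A w⟫*⟪A t,u⟫ - ⟪A s,w⟫*⟪t,A u⟫ = 0)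
      ∧ (⟪y,u⟫*⟪s,y⟫*⟪t,A w⟫ + ⟪s,A u⟫*(⟪y,w⟫*⟪t,y⟫) - ⟪y,w⟫*⟪s,y⟫*⟪t,A u⟫
          - ⟪s,A w⟫*(⟪y,u⟫*⟪t,y⟫) = 0) := by
    intro s t u w
    exact extract
      (⟪x,u⟫*⟪s,x⟫*(⟪x,w⟫*⟪t,x⟫) - ⟪x,w⟫*⟪s,x⟫*(⟪x,u⟫*⟪t,x⟫))
      (⟪x,u⟫*⟪s,x⟫*⟪t,A w⟫ + ⟪s,A u⟫*(⟪x,w⟫*⟪t,x⟫) - ⟪x,w⟫*⟪s,x⟫*⟪t,A u⟫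
        - ⟪s,A w⟫*(⟪x,u⟫*⟪t,x⟫))
      (⟪x,u⟫*⟪s,x⟫*⟪A t,w⟫ + ⟪A s,u⟫*(⟪x,w⟫*⟪t,x⟫) - ⟪x,w⟫*⟪s,x⟫*⟪A t,u⟫
        - ⟪A s,w⟫*(⟪x,u⟫*⟪t,x⟫))
      (⟪s,A u⟫*⟪t,A w⟫ - ⟪s,A w⟫*⟪t,A u⟫)
      (⟪x,u⟫*⟪s,x⟫*(⟪y,w⟫*⟪t,y⟫) + ⟪y,u⟫*⟪s,y⟫*(⟪x,w⟫*⟪t,x⟫)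
        - ⟪x,w⟫*⟪s,x⟫*(⟪y,u⟫*⟪t,y⟫) - ⟪y,w⟫*⟪s,y⟫*(⟪x,u⟫*⟪t,x⟫)
        + ⟪s,A u⟫*⟪A t,w⟫ + ⟪A s,u⟫*⟪t,A w⟫ - ⟪s,A w⟫*⟪A t,u⟫ - ⟪A s,w⟫*⟪t,A u⟫)
      (⟪A s,u⟫*⟪A t,w⟫ - ⟪A s,w⟫*⟪A t,u⟫)
      (⟪y,u⟫*⟪s,y⟫*⟪t,A w⟫ + ⟪s,A u⟫*(⟪y,w⟫*⟪t,y⟫) - ⟪y,w⟫*⟪s,y⟫*⟪t,A u⟫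
        - ⟪s,A w⟫*(⟪y,u⟫*⟪t,y⟫))
      (⟪y,u⟫*⟪s,y⟫*⟪A t,w⟫ + ⟪A s,u⟫*(⟪y,w⟫*⟪t,y⟫) - ⟪y,w⟫*⟪s,y⟫*⟪A t,u⟫
        - ⟪A s,w⟫*(⟪y,u⟫*⟪t,y⟫))
      (⟪y,u⟫*⟪s,y⟫*(⟪y,w⟫*⟪t,y⟫) - ⟪y,w⟫*⟪s,y⟫*(⟪y,u⟫*⟪t,y⟫))
      (fun l => by linear_combination hm l s t u w)
  have K1 := fun s t u w => (key s t u w).1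
  have K2 := fun s t u w => (key s t u w).2.1
  have K4 := fun s t u w => (key s t u w).2.2.1
  have K3 := fun s t u w => (key s t u w).2.2.2
  -- A is nonzero
  have hAne : ∃ u0, A u0 ≠ 0 := by
    by_contra h0
    push_neg at h0
    have h4 := K4 x y x y
    simp only [h0, inner_zero_right, inner_zero_left, mul_zero, zero_mul, add_zero,
      sub_zero, zero_sub, zero_add] at h4
    have hsq : (⟪x,x⟫*⟪y,y⟫ - ⟪x,y⟫*⟪y,x⟫)^2 = 0 := by linear_combination h4
    exact hd (sq_eq_zero_iff.mp hsq)
  obtain ⟨u0, hu0⟩ := hAne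
  have hn : ⟪A u0, A u0⟫ ≠ 0 := inner_self_ne_zero.mpr hu0
  -- A has rank one: A w = ⟪η, w⟫ • A u0
  have hAw : ∀ w, ⟪A u0, A u0⟫ • A w = ⟪A u0, A w⟫ • A u0 := by
    intro w
    apply ext_inner_left ℂ
    intro s
    simp only [inner_smul_right]
    linear_combination -(K2 s (A u0) u0 w)
  obtain ⟨η, hη⟩ : ∃ η : H, ∀ w, ⟪η,w⟫ = ⟪A u0,A u0⟫⁻¹ * ⟪A u0, A w⟫ :=
    ⟨(⟪A u0,A u0⟫)⁻¹ • (ContinuousLinearMap.adjoint A) (A u0), fun w => by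
      rw [inner_smul_left, ContinuousLinearMap.adjoint_inner_left, map_inv₀, inner_conj_symm]⟩
  have hA' : ∀ w, A w = ⟪η, w⟫ • A u0 := by
    intro w
    rw [hη w, mul_smul, ← hAw w, inv_smul_smul₀ hn]
  have hη0 : η ≠ 0 := by
    intro h0
    apply hu0
    have := hA' u0
    rwa [h0, inner_zero_left, zero_smul] at this
  -- factored conditions from K1 and K3
  have hfac1 : ∀ s t u w : H,
      (⟪x,u⟫*⟪η,w⟫ - ⟪x,w⟫*⟪η,u⟫) * (⟪s,x⟫*⟪t,A u0⟫ - ⟪s,A u0⟫*⟪t,x⟫) = 0 := by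
    intro s t u w
    have h1 := K1 s t u w
    rw [hA' u, hA' w] at h1
    simp only [inner_smul_right] at h1
    linear_combination h1
  have hfac2 : ∀ s t u w : H,
      (⟪y,u⟫*⟪η,w⟫ - ⟪y,w⟫*⟪η,u⟫) * (⟪s,y⟫*⟪t,A u0⟫ - ⟪s,A u0⟫*⟪t,y⟫) = 0 := by
    intro s t u w
    have h1 := K3 s t u w
    rw [hA' u, hA' w] at h1
    simp only [inner_smul_right] at h1
    linear_combination h1
  -- dichotomies
  have dich1 : (∀ u w : H, ⟪x,u⟫*⟪η,w⟫ - ⟪x,w⟫*⟪η,u⟫ = 0)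
      ∨ (∀ s t : H, ⟪s,x⟫*⟪t,A u0⟫ - ⟪s,A u0⟫*⟪t,x⟫ = 0) := by
    by_cases hc : ∀ u w : H, ⟪x,u⟫*⟪η,w⟫ - ⟪x,w⟫*⟪η,u⟫ = 0
    · exact Or.inl hc
    · push_neg at hc
      obtain ⟨u, w, hc⟩ := hc
      refine Or.inr fun s t => ?_
      rcases mul_eq_zero.mp (hfac1 s t u w) with h' | h'
      · exact absurd h' hc
      · exact h'
  have dich2 : (∀ u w : H, ⟪y,u⟫*⟪η,w⟫ - ⟪y,w⟫*⟪η,u⟫ = 0)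
      ∨ (∀ s t : H, ⟪s,y⟫*⟪t,A u0⟫ - ⟪s,A u0⟫*⟪t,y⟫ = 0) := by
    by_cases hc : ∀ u w : H, ⟪y,u⟫*⟪η,w⟫ - ⟪y,w⟫*⟪η,u⟫ = 0
    · exact Or.inl hc
    · push_neg at hc
      obtain ⟨u, w, hc⟩ := hc
      refine Or.inr fun s t => ?_
      rcases mul_eq_zero.mp (hfac2 s t u w) with h' | h'
      · exact absurd h' hc
      · exact h'
  -- turning the factored conditions into parallelism
  have etax : (∀ u w : H, ⟪x,u⟫*⟪η,w⟫ - ⟪x,w⟫*⟪η,u⟫ = 0) →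
      η = (⟪x,x⟫⁻¹ * ⟪x,η⟫) • x := by
    intro hc
    apply ext_inner_right ℂ
    intro v
    rw [inner_smul_left, map_mul, map_inv₀, inner_conj_symm, inner_conj_symm]
    have h2 := hc x v
    field_simp
    linear_combination h2
  have etay : (∀ u w : H, ⟪y,u⟫*⟪η,w⟫ - ⟪y,w⟫*⟪η,u⟫ = 0) →
      η = (⟪y,y⟫⁻¹ * ⟪y,η⟫) • y := by
    intro hc
    apply ext_inner_right ℂ
    intro v
    rw [inner_smul_left, map_mul, map_inv₀, inner_conj_symm, inner_conj_symm]
    have h2 := hc y v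
    field_simp
    linear_combination h2
  have xix : (∀ s t : H, ⟪s,x⟫*⟪t,A u0⟫ - ⟪s,A u0⟫*⟪t,x⟫ = 0) →
      A u0 = (⟪x,x⟫⁻¹ * ⟪x,A u0⟫) • x := by
    intro hc
    apply ext_inner_left ℂ
    intro v
    rw [inner_smul_right]
    have h2 := hc x v
    field_simp
    linear_combination h2
  have xiy : (∀ s t : H, ⟪s,y⟫*⟪t,A u0⟫ - ⟪s,A u0⟫*⟪t,y⟫ = 0) →
      A u0 = (⟪y,y⟫⁻¹ * ⟪y,A u0⟫) • y := by
    intro hc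
    apply ext_inner_left ℂ
    intro v
    rw [inner_smul_right]
    have h2 := hc y v
    field_simp
    linear_combination h2
  -- norm-one extraction from K4
  have normone : ∀ μ : ℂ, μ * (starRingEnd ℂ) μ = 1 → ‖μ‖ = 1 := by
    intro μ hμ
    rw [Complex.mul_conj] at hμ
    have h1 : Complex.normSq μ = 1 := by exact_mod_cast hμ
    have h2 : ‖μ‖ ^ 2 = 1 := by
      rw [Complex.sq_norm, h1]
    nlinarith [norm_nonneg μ]
  -- case analysis
  rcases dich1 with hc1 | hc1
  · rcases dich2 with hc2 | hc2
    · -- η parallel to both x and y : contradiction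
      exfalso
      have e1 := etax hc1
      have e2 := etay hc2
      have hz : (⟪x,x⟫⁻¹ * ⟪x,η⟫) • x + (-(⟪y,y⟫⁻¹ * ⟪y,η⟫)) • y = 0 := by
        rw [neg_smul, ← e1, ← e2]
        abel
      have := (hpair _ _ hz).1
      rw [this, zero_smul] at e1
      exact hη0 e1
    · -- η ∥ x, ξ ∥ y : A = μ • rk1 y x
      have e1 := etax hc1
      have e2 := xiy hc2
      obtain ⟨p, hp⟩ : ∃ p : ℂ, p = ⟪x,x⟫⁻¹ * ⟪x,η⟫ := ⟨_, rfl⟩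
      obtain ⟨q, hq⟩ : ∃ q : ℂ, q = ⟪y,y⟫⁻¹ * ⟪y,A u0⟫ := ⟨_, rfl⟩
      rw [← hp] at e1
      rw [← hq] at e2
      have hAμ : ∀ v, A v = ((starRingEnd ℂ p) * q * ⟪x,v⟫) • y := by
        intro v
        rw [hA' v, e2]
        nth_rewrite 1 [e1]
        rw [inner_smul_left, smul_smul]
        ring_nf
      refine ⟨(starRingEnd ℂ p) * q, ?_, Or.inr ?_⟩
      · apply normone
        have h4 := K4 x y x y
        simp only [hAμ, inner_smul_right, inner_smul_left, map_mul, inner_conj_symm,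
          RingHomCompTriple.comp_apply, RingHom.id_apply] at h4
        have h5 : (1 - ((starRingEnd ℂ p) * q) * (starRingEnd ℂ ((starRingEnd ℂ p) * q)))
            * (⟪x,x⟫*⟪y,y⟫ - ⟪x,y⟫*⟪y,x⟫)^2 = 0 := by
          simp only [map_mul, RingHomCompTriple.comp_apply, RingHom.id_apply,
            starRingEnd_self_apply]
          linear_combination h4
        rcases mul_eq_zero.mp h5 with h6 | h6
        · linear_combination -h6
        · exact absurd (sq_eq_zero_iff.mp h6) hd
      · ext v
        simp only [ContinuousLinearMap.smul_apply, rk1, ContinuousLinearMap.smulRight_apply,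
          innerSL_apply_apply, hAμ v, smul_smul]
  · rcases dich2 with hc2 | hc2
    · -- ξ ∥ x, η ∥ y : A = μ • rk1 x y
      have e1 := xix hc1
      have e2 := etay hc2
      obtain ⟨p, hp⟩ : ∃ p : ℂ, p = ⟪y,y⟫⁻¹ * ⟪y,η⟫ := ⟨_, rfl⟩
      obtain ⟨q, hq⟩ : ∃ q : ℂ, q = ⟪x,x⟫⁻¹ * ⟪x,A u0⟫ := ⟨_, rfl⟩
      rw [← hp] at e2
      rw [← hq] at e1
      have hAμ : ∀ v, A v = ((starRingEnd ℂ p) * q * ⟪y,v⟫) • x := by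
        intro v
        rw [hA' v, e1]
        nth_rewrite 1 [e2]
        rw [inner_smul_left, smul_smul]
        ring_nf
      refine ⟨(starRingEnd ℂ p) * q, ?_, Or.inl ?_⟩
      · apply normone
        have h4 := K4 x y x y
        simp only [hAμ, inner_smul_right, inner_smul_left, map_mul, inner_conj_symm,
          RingHomCompTriple.comp_apply, RingHom.id_apply] at h4
        have h5 : (1 - ((starRingEnd ℂ p) * q) * (starRingEnd ℂ ((starRingEnd ℂ p) * q)))
            * (⟪x,x⟫*⟪y,y⟫ - ⟪x,y⟫*⟪y,x⟫)^2 = 0 := by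
          simp only [map_mul, RingHomCompTriple.comp_apply, RingHom.id_apply,
            starRingEnd_self_apply]
          linear_combination h4
        rcases mul_eq_zero.mp h5 with h6 | h6
        · linear_combination -h6
        · exact absurd (sq_eq_zero_iff.mp h6) hd
      · ext v
        simp only [ContinuousLinearMap.smul_apply, rk1, ContinuousLinearMap.smulRight_apply,
          innerSL_apply_apply, hAμ v, smul_smul]
    · -- ξ parallel to both x and y : contradiction
      exfalso
      have e1 := xix hc1
      have e2 := xiy hc2
      have hz : (⟪x,x⟫⁻¹ * ⟪x,A u0⟫) • x + (-(⟪y,y⟫⁻¹ * ⟪y,A u0⟫)) • y = 0 := by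
        rw [neg_smul, ← e1, ← e2]
        abel
      have := (hpair _ _ hz).1
      rw [this, zero_smul] at e1
      exact hu0 e1
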